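/- For every a.e. strongly measurable x : Ω → A, the set spm(x) is bounded by the norm of x: if a measurable a : Ω → ℂ belongs to spm(x), then |a(ω)| ≤ ‖x(ω)‖ for μ-almost every ω. (Boundedness part of Theorem 2.5, specialized to the Banach–Kantorovich algebra L⁰(Ω, A).) -/

import Mathlib

open MeasureTheory Filter

/-- `a ∈ spm(x)`: for every measurable set `S` of positive measure there is no a.e.
strongly measurable local inverse of `a·1 − x` on `S`. -/
def MemSpm {Ω : Type*} [MeasurableSpace Ω] (μ : Measure Ω)
    {A : Type*} [NormedRing A] [NormedAlgebra ℂ A]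
    (x : Ω → A) (a : Ω → ℂ) : Prop :=
  ∀ S : Set Ω, MeasurableSet S → 0 < μ S →
    ¬ ∃ y : Ω → A, AEStronglyMeasurable y μ ∧
      ∀ᵐ ω ∂μ, ω ∈ S →
        ((a ω • (1 : A) - x ω) * y ω = 1 ∧ y ω * (a ω • (1 : A) - x ω) = 1)

/-- `spm(x)` is bounded by the norm of `x`: if a measurable `a : Ω → ℂ`
belongs to `spm(x)` then `|a ω| ≤ ‖x ω‖` for μ-a.e. ω. (Boundedness part of
Theorem 2.5.) -/
theorem stmt8 {Ω : Type*} [MeasurableSpace Ω] (μ : Measure Ω) [IsFiniteMeasure μ]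
    (hμ : 0 < μ Set.univ)
    {A : Type*} [NormedRing A] [NormedAlgebra ℂ A] [CompleteSpace A] [NormOneClass A]
    (x : Ω → A) (hx : AEStronglyMeasurable x μ)
    (a : Ω → ℂ) (ha : Measurable a) (haspm : MemSpm μ x a) :
    ∀ᵐ ω ∂μ, ‖a ω‖ ≤ ‖x ω‖ := by
  classical
  set x' : Ω → A := hx.mk x with hx'def
  have hx' : StronglyMeasurable x' := hx.stronglyMeasurable_mk
  have hxx' : x =ᵐ[μ] x' := hx.ae_eq_mk
  by_contra h
  rw [ae_iff] at h
  -- the bad set, defined with the strongly measurable modification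
  set S : Set Ω := {ω | ‖x' ω‖ < ‖a ω‖} with hSdef
  have hnorm : Measurable fun ω => ‖x' ω‖ := hx'.norm.measurable
  have habs : Measurable fun ω => ‖a ω‖ := ha.norm
  have hS : MeasurableSet S := measurableSet_lt hnorm habs
  have hST : {ω | ¬ ‖a ω‖ ≤ ‖x ω‖} =ᵐ[μ] S := by
    filter_upwards [hxx'] with ω hω
    show (¬ ‖a ω‖ ≤ ‖x ω‖) = (‖x' ω‖ < ‖a ω‖)
    rw [hω, eq_iff_iff, not_le]
  have hpos : 0 < μ S := by
    rw [← measure_congr hST]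
    exact pos_iff_ne_zero.mpr h
  refine haspm S hS hpos ?_
  -- the local inverse
  set y : Ω → A := fun ω =>
    if ‖x' ω‖ < ‖a ω‖ then
      (a ω)⁻¹ • ∑' n : ℕ, ((a ω)⁻¹ • x' ω) ^ n
    else 0 with hydef
  -- partial-sum approximations
  set g : ℕ → Ω → A := fun N ω =>
    if ‖x' ω‖ < ‖a ω‖ then
      (a ω)⁻¹ • ∑ n ∈ Finset.range N, ((a ω)⁻¹ • x' ω) ^ n
    else 0 with hgdef
  have hg : ∀ N, StronglyMeasurable (g N) := by
    intro N
    have hinv : StronglyMeasurable fun ω => (a ω)⁻¹ := (ha.inv).stronglyMeasurable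
    have ht : StronglyMeasurable fun ω => (a ω)⁻¹ • x' ω := hinv.smul hx'
    have hsum : StronglyMeasurable fun ω =>
        (a ω)⁻¹ • ∑ n ∈ Finset.range N, ((a ω)⁻¹ • x' ω) ^ n := by
      refine hinv.smul ?_
      have hp : ∀ n : ℕ, StronglyMeasurable fun ω => ((a ω)⁻¹ • x' ω) ^ n := by
        intro n
        induction n with
        | zero => simpa using stronglyMeasurable_const
        | succ k ih =>
          simp_rw [pow_succ]
          exact ih.mul ht
      exact Finset.stronglyMeasurable_fun_sum _ fun n _ => hp n
    exact hsum.ite hS stronglyMeasurable_const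
  have hym : StronglyMeasurable y := by
    refine stronglyMeasurable_of_tendsto atTop hg ?_
    rw [tendsto_pi_nhds]
    intro ω
    by_cases hc : ‖x' ω‖ < ‖a ω‖
    · have ha0 : a ω ≠ 0 := by
        intro h0
        rw [h0] at hc
        simp at hc
        exact absurd hc (not_lt.mpr (norm_nonneg _))
      have hlt : ‖(a ω)⁻¹ • x' ω‖ < 1 := by
        rw [norm_smul, norm_inv]
        rw [inv_mul_lt_iff₀ (lt_of_le_of_lt (norm_nonneg _) hc), mul_one]
        exact hc
      have hsummable := summable_geometric_of_norm_lt_one hlt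
      have := hsummable.hasSum.tendsto_sum_nat
      have := this.const_smul ((a ω)⁻¹)
      simp only [hydef, hgdef, if_pos hc]
      exact this
    · simp only [hydef, hgdef, if_neg hc]
      exact tendsto_const_nhds
  refine ⟨y, hym.aestronglyMeasurable, ?_⟩
  filter_upwards [hxx'] with ω hω hωS
  have hc : ‖x' ω‖ < ‖a ω‖ := hωS
  have ha0 : a ω ≠ 0 := by
    intro h0
    rw [h0] at hc
    simp at hc
    exact absurd hc (not_lt.mpr (norm_nonneg _))
  have hlt : ‖(a ω)⁻¹ • x' ω‖ < 1 := by
    rw [norm_smul, norm_inv]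
    rw [inv_mul_lt_iff₀ (lt_of_le_of_lt (norm_nonneg _) hc), mul_one]
    exact hc
  set t : A := (a ω)⁻¹ • x' ω with htdef
  have hy : y ω = (a ω)⁻¹ • ∑' n : ℕ, t ^ n := by
    simp only [hydef, if_pos hc, htdef]
  have hfact : a ω • (1 : A) - x ω = a ω • ((1 : A) - t) := by
    rw [hω, htdef, smul_sub, smul_smul, mul_inv_cancel₀ ha0, one_smul]
  constructor
  · rw [hy, hfact, smul_mul_smul_comm, mul_inv_cancel₀ ha0, one_smul,
      mul_neg_geom_series t hlt]
  · rw [hy, hfact, smul_mul_smul_comm, inv_mul_cancel₀ ha0, one_smul,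
      geom_series_mul_neg t hlt]
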